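/- Let c > 0 and t0 < t1 with c(t1−t0) < R(t0)R(t1). Then the partial derivative of the generating function h with respect to its second argument satisfies ∂h/∂t1 (t0,t1) = −c²/(2R(t1)²) + R'(t1)·w − ½w², where w := (R(t1)² + √(R(t0)²R(t1)² − c²(t1−t0)²)) / (R(t1)·(t1−t0)). -/

import Mathlib

noncomputable section

/-- Sup-norm of a function (for a continuous 1-periodic function this is the maximum of `|f|`). -/
def supNorm (f : ℝ → ℝ) : ℝ := sSup (Set.range fun t => |f t|)

/-- Minimum value of `R` (attained for a continuous 1-periodic `R`). -/
def Rmin (R : ℝ → ℝ) : ℝ := sInf (Set.range R)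

/-- Maximum value of `R` (attained for a continuous 1-periodic `R`). -/
def Rmax (R : ℝ → ℝ) : ℝ := sSup (Set.range R)

/-- The constant `σ = min { R_min/(2‖R'‖) , 2√(1+√(1−ε²))·R_min/√‖(R²)''‖ }`. -/
def sigmaR (R : ℝ → ℝ) (ε : ℝ) : ℝ :=
  min (Rmin R / (2 * supNorm (deriv R)))
    (2 * Real.sqrt (1 + Real.sqrt (1 - ε ^ 2)) * Rmin R /
      Real.sqrt (supNorm (deriv (deriv (fun t => R t ^ 2)))))

/-- `√(R(t0)²R(t1)² − c²(t1−t0)²)`. -/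
def Ssq (R : ℝ → ℝ) (c t0 t1 : ℝ) : ℝ :=
  Real.sqrt (R t0 ^ 2 * R t1 ^ 2 - c ^ 2 * (t1 - t0) ^ 2)

/-- `A(t0,t1) = (R(t0)² + R(t1)² + 2√(R(t0)²R(t1)² − c²(t1−t0)²))/(t1−t0)²`. -/
def Afun (R : ℝ → ℝ) (c t0 t1 : ℝ) : ℝ :=
  (R t0 ^ 2 + R t1 ^ 2 + 2 * Ssq R c t0 t1) / (t1 - t0) ^ 2

/-- `B = −( t0 + (R(t0)² + √(R(t0)²R(t1)² − c²(t1−t0)²))/((t1−t0)·A) )`. -/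
def Bfun (R : ℝ → ℝ) (c t0 t1 : ℝ) : ℝ :=
  -(t0 + (R t0 ^ 2 + Ssq R c t0 t1) / ((t1 - t0) * Afun R c t0 t1))

/-- The Dirichlet solution `r(t) = √((A²(t+B)² + c²)/A)`. -/
def dirich (R : ℝ → ℝ) (c t0 t1 t : ℝ) : ℝ :=
  Real.sqrt ((Afun R c t0 t1 ^ 2 * (t + Bfun R c t0 t1) ^ 2 + c ^ 2) / Afun R c t0 t1)

/-- The generating function
`h(t0,t1) = ½(t1−t0)·A(t0,t1) + c·arctan( c(t1−t0)/√(R(t0)²R(t1)² − c²(t1−t0)²) )`. -/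
def hgen (R : ℝ → ℝ) (c t0 t1 : ℝ) : ℝ :=
  (1 / 2) * (t1 - t0) * Afun R c t0 t1 +
    c * Real.arctan (c * (t1 - t0) / Ssq R c t0 t1)

/-- `∂₁h`, the partial derivative of `h` in its first argument. -/
def d1h (R : ℝ → ℝ) (c t0 t1 : ℝ) : ℝ := deriv (fun s => hgen R c s t1) t0

/-- `∂₂h`, the partial derivative of `h` in its second argument. -/
def d2h (R : ℝ → ℝ) (c t0 t1 : ℝ) : ℝ := deriv (fun s => hgen R c t0 s) t1

/-- `∂₁₂h`, the mixed second partial derivative of `h`. -/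
def d12h (R : ℝ → ℝ) (c t0 t1 : ℝ) : ℝ := deriv (fun s => d1h R c t0 s) t1

set_option maxHeartbeats 1000000 in
/-- For `c > 0` and `t0 < t1` with `c(t1−t0) < R(t0)R(t1)`, the partial
derivative of the generating function `h` in its second argument is
`∂₂h(t0,t1) = −c²/(2R(t1)²) + R'(t1)·w − ½w²`, with
`w = (R(t1)² + √(R(t0)²R(t1)² − c²(t1−t0)²))/(R(t1)(t1−t0))`. -/
theorem d2h_formula (R : ℝ → ℝ) (c t0 t1 : ℝ)
    (hC : ContDiff ℝ 2 R) (hper : ∀ t, R (t + 1) = R t) (hpos : ∀ t, 0 < R t)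
    (hnc : ∃ a b, R a ≠ R b)
    (hc : 0 < c) (ht : t0 < t1) (hlt : c * (t1 - t0) < R t0 * R t1) :
    d2h R c t0 t1 =
      -(c ^ 2 / (2 * R t1 ^ 2)) +
        deriv R t1 * ((R t1 ^ 2 + Ssq R c t0 t1) / (R t1 * (t1 - t0))) -
        (1 / 2) * ((R t1 ^ 2 + Ssq R c t0 t1) / (R t1 * (t1 - t0))) ^ 2 := by
  have hr0 : 0 < R t0 := hpos t0
  have hr1 : 0 < R t1 := hpos t1
  have htau : 0 < t1 - t0 := sub_pos.mpr ht
  have hP : 0 < R t0 ^ 2 * R t1 ^ 2 - c ^ 2 * (t1 - t0) ^ 2 := by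
    nlinarith [mul_pos hc htau]
  set S := Ssq R c t0 t1 with hSdef
  have hS0 : 0 < S := Real.sqrt_pos.mpr hP
  have hS2 : S ^ 2 = R t0 ^ 2 * R t1 ^ 2 - c ^ 2 * (t1 - t0) ^ 2 := Real.sq_sqrt hP.le
  have hR1 : HasDerivAt R (deriv R t1) t1 :=
    ((hC.differentiable (by norm_num)) t1).hasDerivAt
  have h1 : HasDerivAt (fun s => R s ^ 2) (2 * R t1 * deriv R t1) t1 := by
    have := hR1.pow 2
    norm_num at this
    exact this
  have h2 : HasDerivAt (fun s : ℝ => (s - t0) ^ 2) (2 * (t1 - t0)) t1 := by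
    have := ((hasDerivAt_id t1).sub_const t0).pow 2
    norm_num at this
    exact this
  have hg : HasDerivAt (fun s => R t0 ^ 2 * R s ^ 2 - c ^ 2 * (s - t0) ^ 2)
      (R t0 ^ 2 * (2 * R t1 * deriv R t1) - c ^ 2 * (2 * (t1 - t0))) t1 :=
    (h1.const_mul _).sub (h2.const_mul _)
  have hSder : HasDerivAt (fun s => Ssq R c t0 s)
      (1 / (2 * S) * (R t0 ^ 2 * (2 * R t1 * deriv R t1) - c ^ 2 * (2 * (t1 - t0)))) t1 := by
    have := (Real.hasDerivAt_sqrt hP.ne').comp t1 hg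
    simpa [hSdef, Ssq, Function.comp_def] using this
  set S' := 1 / (2 * S) * (R t0 ^ 2 * (2 * R t1 * deriv R t1) - c ^ 2 * (2 * (t1 - t0))) with hS'def
  have hN : HasDerivAt (fun s => R t0 ^ 2 + R s ^ 2 + 2 * Ssq R c t0 s)
      (2 * R t1 * deriv R t1 + 2 * S') t1 := by
    have := (h1.const_add (R t0 ^ 2)).add (hSder.const_mul 2)
    simpa [Pi.add_def] using this
  have hAder : HasDerivAt (fun s => Afun R c t0 s)
      (((2 * R t1 * deriv R t1 + 2 * S') * (t1 - t0) ^ 2 -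
        (R t0 ^ 2 + R t1 ^ 2 + 2 * S) * (2 * (t1 - t0))) / ((t1 - t0) ^ 2) ^ 2) t1 := by
    have := hN.div h2 (by positivity)
    simpa [Afun, Pi.div_def] using this
  have hlin : HasDerivAt (fun s : ℝ => (1 : ℝ) / 2 * (s - t0)) (1 / 2) t1 := by
    have := ((hasDerivAt_id t1).sub_const t0).const_mul ((1 : ℝ) / 2)
    simpa using this
  have hF1 : HasDerivAt (fun s => 1 / 2 * (s - t0) * Afun R c t0 s)
      (1 / 2 * Afun R c t0 t1 +
        1 / 2 * (t1 - t0) *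
          (((2 * R t1 * deriv R t1 + 2 * S') * (t1 - t0) ^ 2 -
            (R t0 ^ 2 + R t1 ^ 2 + 2 * S) * (2 * (t1 - t0))) / ((t1 - t0) ^ 2) ^ 2)) t1 :=
    hlin.mul hAder
  have hnum : HasDerivAt (fun s : ℝ => c * (s - t0)) c t1 := by
    have := ((hasDerivAt_id t1).sub_const t0).const_mul c
    simpa using this
  have hu : HasDerivAt (fun s => c * (s - t0) / Ssq R c t0 s)
      ((c * S - c * (t1 - t0) * S') / S ^ 2) t1 := hnum.div hSder hS0.ne'
  have harctan : HasDerivAt (fun s => Real.arctan (c * (s - t0) / Ssq R c t0 s))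
      (1 / (1 + (c * (t1 - t0) / S) ^ 2) * ((c * S - c * (t1 - t0) * S') / S ^ 2)) t1 := by
    have := (Real.hasDerivAt_arctan (c * (t1 - t0) / S)).comp t1 hu
    simpa [Function.comp_def] using this
  have htot : HasDerivAt (fun s => hgen R c t0 s)
      ((1 / 2 * Afun R c t0 t1 +
        1 / 2 * (t1 - t0) *
          (((2 * R t1 * deriv R t1 + 2 * S') * (t1 - t0) ^ 2 -
            (R t0 ^ 2 + R t1 ^ 2 + 2 * S) * (2 * (t1 - t0))) / ((t1 - t0) ^ 2) ^ 2)) +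
       c * (1 / (1 + (c * (t1 - t0) / S) ^ 2) * ((c * S - c * (t1 - t0) * S') / S ^ 2))) t1 := by
    have := hF1.add (harctan.const_mul c)
    simpa [hgen, Pi.add_def] using this
  have hd : d2h R c t0 t1 = _ := htot.deriv
  rw [d2h] at hd ⊢
  rw [hd]
  have hA : Afun R c t0 t1 = (R t0 ^ 2 + R t1 ^ 2 + 2 * S) / (t1 - t0) ^ 2 := rfl
  rw [hA, hS'def]
  have h1u : (0:ℝ) < 1 + (c * (t1 - t0) / S) ^ 2 := by positivity
  have hR0 : R t0 ^ 2 = (S ^ 2 + c ^ 2 * (t1 - t0) ^ 2) / R t1 ^ 2 := by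
    field_simp
    linarith
  rw [hR0]
  field_simp
  ring
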